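/- Let (Ω, Σ, P) be a probability space, let N : Ω → ℕ be a random variable and a, b ∈ ℝ with P(N = n) = (a + b/n)·P(N = n − 1) for every integer n ≥ 1. Let v ∈ (0, 1) with a·(1 − v) < 1, let {Z_k}_{k ≥ 1} be i.i.d. Bernoulli random variables with P(Z_1 = 1) = v, independent of N, and set M := Σ_{k=1}^N Z_k (with M := 0 on {N = 0}). Then P(M = m) = (ã + b̃/m)·P(M = m − 1) for every integer m ≥ 1, where ã := a·v / (1 − a·(1 − v)) and b̃ := b·v / (1 − a·(1 − v)); that is, the thinned claim number distribution again belongs to the Panjer(ã, b̃; 0) class. -/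

import Mathlib

open MeasureTheory ProbabilityTheory

/-- Binomial term for the thinning of `N` with retention probability `v`. -/
noncomputable def panjerF {Ω : Type*} [MeasurableSpace Ω] (P : Measure Ω) (N : Ω → ℕ)
    (v : ℝ) (n m : ℕ) : ℝ :=
  (P {ω | N ω = n}).toReal * ((n.choose m : ℝ) * v ^ m * (1 - v) ^ (n - m))

/-- A sum of i.i.d. Bernoulli(v) indicators is binomially distributed. -/
lemma panjer_bernoulli_sum_eq {Ω : Type*} [MeasurableSpace Ω] (P : Measure Ω)
    [IsProbabilityMeasure P]
    (v : ℝ) (Z : ℕ → Ω → ℕ) (hZ : ∀ k, Measurable (Z k)) (hZ01 : ∀ k ω, Z k ω ≤ 1)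
    (hZv : ∀ k, (P {ω | Z k ω = 1}).toReal = v)
    (hZiid : iIndepFun Z P) :
    ∀ n m : ℕ, (P {ω | (∑ k ∈ Finset.range n, Z k ω) = m}).toReal
      = (n.choose m : ℝ) * v ^ m * (1 - v) ^ (n - m) := by
  have hZ0 : ∀ k, (P {ω | Z k ω = 0}).toReal = 1 - v := by
    intro k
    have hset : {ω | Z k ω = 0} = {ω | Z k ω = 1}ᶜ := by
      ext ω; have := hZ01 k ω; simp only [Set.mem_setOf_eq, Set.mem_compl_iff]; omega
    have hm : MeasurableSet {ω | Z k ω = 1} := hZ k (measurableSet_singleton 1)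
    rw [hset, prob_compl_eq_one_sub hm,
      ENNReal.toReal_sub_of_le prob_le_one ENNReal.one_ne_top, ENNReal.toReal_one, hZv k]
  intro n
  induction n with
  | zero =>
    intro m
    cases m with
    | zero => simp
    | succ m =>
      have : {ω : Ω | (∑ k ∈ Finset.range 0, Z k ω) = m + 1} = ∅ := by
        ext ω; simp
      simp [this]
  | succ n ih =>
    intro m
    have hIndep : IndepFun (∑ j ∈ Finset.range n, Z j) (Z n) P :=
      hZiid.indepFun_sum_range_succ hZ n
    have hprod : ∀ m' c : ℕ,
        (P {ω | (∑ k ∈ Finset.range n, Z k ω) = m' ∧ Z n ω = c}).toReal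
          = (P {ω | (∑ k ∈ Finset.range n, Z k ω) = m'}).toReal
            * (P {ω | Z n ω = c}).toReal := by
      intro m' c
      have hset : {ω | (∑ k ∈ Finset.range n, Z k ω) = m' ∧ Z n ω = c}
          = (∑ j ∈ Finset.range n, Z j) ⁻¹' {m'} ∩ (Z n) ⁻¹' {c} := by
        ext ω; simp [Finset.sum_apply]
      have hset1 : {ω | (∑ k ∈ Finset.range n, Z k ω) = m'}
          = (∑ j ∈ Finset.range n, Z j) ⁻¹' {m'} := by
        ext ω; simp [Finset.sum_apply]
      have hset2 : {ω | Z n ω = c} = (Z n) ⁻¹' {c} := rfl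
      rw [hset, hset1, hset2,
        hIndep.measure_inter_preimage_eq_mul _ _ (measurableSet_singleton m')
          (measurableSet_singleton c), ENNReal.toReal_mul]
    have hsumMeas : Measurable (fun ω => ∑ k ∈ Finset.range n, Z k ω) :=
      Finset.measurable_sum _ fun k _ => hZ k
    cases m with
    | zero =>
      have hset : {ω | (∑ k ∈ Finset.range (n+1), Z k ω) = 0}
          = {ω | (∑ k ∈ Finset.range n, Z k ω) = 0 ∧ Z n ω = 0} := by
        ext ω; simp [Finset.sum_range_succ, Nat.add_eq_zero]
      rw [hset, hprod 0 0, ih 0, hZ0 n]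
      simp [pow_succ]
    | succ m =>
      have hset : {ω | (∑ k ∈ Finset.range (n+1), Z k ω) = m + 1}
          = {ω | (∑ k ∈ Finset.range n, Z k ω) = m + 1 ∧ Z n ω = 0}
            ∪ {ω | (∑ k ∈ Finset.range n, Z k ω) = m ∧ Z n ω = 1} := by
        ext ω
        have := hZ01 n ω
        simp only [Set.mem_setOf_eq, Set.mem_union, Finset.sum_range_succ]
        omega
      have hdisj : Disjoint {ω | (∑ k ∈ Finset.range n, Z k ω) = m + 1 ∧ Z n ω = 0}
          {ω | (∑ k ∈ Finset.range n, Z k ω) = m ∧ Z n ω = 1} := by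
        rw [Set.disjoint_left]; rintro ω ⟨h1, h2⟩ ⟨h3, h4⟩; omega
      have hm2 : MeasurableSet {ω | (∑ k ∈ Finset.range n, Z k ω) = m ∧ Z n ω = 1} := by
        have : {ω | (∑ k ∈ Finset.range n, Z k ω) = m ∧ Z n ω = 1}
            = (fun ω => ∑ k ∈ Finset.range n, Z k ω) ⁻¹' {m} ∩ (Z n) ⁻¹' {1} := by
          ext ω; simp
        rw [this]
        exact (hsumMeas (measurableSet_singleton m)).inter (hZ n (measurableSet_singleton 1))
      rw [hset, measure_union hdisj hm2, ENNReal.toReal_add (measure_ne_top _ _)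
        (measure_ne_top _ _), hprod (m+1) 0, hprod m 1, ih (m+1), ih m, hZ0 n, hZv n]
      rw [Nat.choose_succ_succ n m]
      push_cast
      by_cases hmn : m + 1 ≤ n
      · have he2 : n - m = n - (m + 1) + 1 := by omega
        rw [he2, pow_succ, pow_succ]
        ring
      · have h1 : n.choose (m + 1) = 0 := Nat.choose_eq_zero_of_lt (by omega)
        have h2 : n - m = 0 := by omega
        rw [h1, h2, pow_succ]
        push_cast
        ring

/-- The one-step Panjer recursion transferred to the binomial terms. -/
lemma panjerF_succ {Ω : Type*} [MeasurableSpace Ω] (P : Measure Ω) [IsProbabilityMeasure P]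
    (N : Ω → ℕ) (a b : ℝ)
    (hPanjer : ∀ n : ℕ, 1 ≤ n →
      (P {ω | N ω = n}).toReal = (a + b / (n : ℝ)) * (P {ω | N ω = n - 1}).toReal)
    (v : ℝ) (m' n : ℕ) :
    panjerF P N v (n+1) (m'+1) = a * (1-v) * panjerF P N v n (m'+1)
      + ((a + b/((m':ℝ)+1)) * v) * panjerF P N v n m' := by
  have hp : (((n+1).choose (m'+1) : ℕ) : ℝ) = (n.choose m' : ℝ) + (n.choose (m'+1) : ℝ) := by
    exact_mod_cast congrArg (Nat.cast : ℕ → ℝ) (Nat.choose_succ_succ n m')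
  have hc : ((n:ℝ)+1) * (n.choose m' : ℝ) = (((n+1).choose (m'+1) : ℕ) : ℝ) * ((m':ℝ)+1) := by
    exact_mod_cast congrArg (Nat.cast : ℕ → ℝ) (Nat.add_one_mul_choose_eq n m')
  have hn1 : ((n:ℝ)+1) ≠ 0 := by positivity
  have hm1 : ((m':ℝ)+1) ≠ 0 := by positivity
  have s : (a + b/((n:ℝ)+1)) * (((n+1).choose (m'+1) : ℕ) : ℝ)
      = a * (n.choose (m'+1) : ℝ) + (a + b/((m':ℝ)+1)) * (n.choose m' : ℝ) := by
    field_simp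
    linear_combination ((m':ℝ)+1) * ((n:ℝ)+1) * a * hp - b*hc
  have hPn : (P {ω | N ω = n+1}).toReal = (a + b/((n:ℝ)+1)) * (P {ω | N ω = n}).toReal := by
    have := hPanjer (n+1) (by omega)
    simpa using this
  unfold panjerF
  rw [hPn]
  by_cases hmn : m' + 1 ≤ n
  · have e1 : n + 1 - (m' + 1) = n - (m' + 1) + 1 := by omega
    have e2 : n - m' = n - (m' + 1) + 1 := by omega
    rw [e1, e2]
    simp only [pow_succ]
    linear_combination ((P {ω | N ω = n}).toReal * v ^ m' * v
      * (1-v) ^ (n - (m'+1)) * (1-v)) * s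
  · rcases Nat.lt_or_ge n m' with hlt | hge
    · have h1 : n.choose m' = 0 := Nat.choose_eq_zero_of_lt hlt
      have h2 : n.choose (m'+1) = 0 := Nat.choose_eq_zero_of_lt (by omega)
      have h3 : (n+1).choose (m'+1) = 0 := Nat.choose_eq_zero_of_lt (by omega)
      rw [h1, h2, h3]
      push_cast
      ring
    · have hnm : n = m' := by omega
      subst hnm
      have h2 : n.choose (n+1) = 0 := Nat.choose_eq_zero_of_lt (by omega)
      rw [h2, Nat.choose_self, Nat.choose_self]
      have e1 : n + 1 - (n + 1) = 0 := by omega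
      have e2 : n - n = 0 := by omega
      have e3 : n - (n+1) = 0 := by omega
      rw [e1, e2, e3]
      simp only [pow_succ, pow_zero]
      ring

/-- Thinning a Panjer(a, b; 0) claim number `N` with i.i.d. Bernoulli(v)
indicators independent of `N` produces a claim number `M` in the Panjer(ã, b̃; 0) class with
`ã = a·v/(1 − a(1 − v))` and `b̃ = b·v/(1 − a(1 − v))`. -/
theorem panjer_thinning
    {Ω : Type*} [MeasurableSpace Ω] (P : Measure Ω) [IsProbabilityMeasure P]
    (N : Ω → ℕ) (hN : Measurable N) (a b : ℝ)
    (hPanjer : ∀ n : ℕ, 1 ≤ n →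
      (P {ω | N ω = n}).toReal = (a + b / (n : ℝ)) * (P {ω | N ω = n - 1}).toReal)
    (v : ℝ) (hv : v ∈ Set.Ioo (0 : ℝ) 1) (hav : a * (1 - v) < 1)
    (Z : ℕ → Ω → ℕ) (hZ : ∀ k, Measurable (Z k))
    (hZ01 : ∀ k ω, Z k ω ≤ 1)
    (hZv : ∀ k, (P {ω | Z k ω = 1}).toReal = v)
    (hZiid : iIndepFun Z P)
    (hZident : ∀ k, P.map (Z k) = P.map (Z 0))
    (hNZ : Indep (MeasurableSpace.comap N inferInstance)
      (MeasurableSpace.comap (fun ω (k : ℕ) => Z k ω) inferInstance) P) :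
    ∀ m : ℕ, 1 ≤ m →
      (P {ω | (∑ k ∈ Finset.range (N ω), Z k ω) = m}).toReal
        = (a * v / (1 - a * (1 - v)) + (b * v / (1 - a * (1 - v))) / (m : ℝ))
          * (P {ω | (∑ k ∈ Finset.range (N ω), Z k ω) = m - 1}).toReal := by
  have hbin := panjer_bernoulli_sum_eq P v Z hZ hZ01 hZv hZiid
  -- decomposition of the event {M = m}
  have hdecomp : ∀ m : ℕ, P {ω | (∑ k ∈ Finset.range (N ω), Z k ω) = m}
      = ∑' n : ℕ, P {ω | N ω = n} * P {ω | (∑ k ∈ Finset.range n, Z k ω) = m} := by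
    intro m
    have hUnion : {ω | (∑ k ∈ Finset.range (N ω), Z k ω) = m}
        = ⋃ n : ℕ, ({ω | N ω = n} ∩ {ω | (∑ k ∈ Finset.range n, Z k ω) = m}) := by
      ext ω
      simp only [Set.mem_iUnion, Set.mem_inter_iff, Set.mem_setOf_eq]
      constructor
      · intro h; exact ⟨N ω, rfl, h⟩
      · rintro ⟨n, rfl, h⟩; exact h
    have hmeasN : ∀ n : ℕ, MeasurableSet {ω | N ω = n} :=
      fun n => hN (measurableSet_singleton n)
    have hmeasS : ∀ n m : ℕ, MeasurableSet {ω | (∑ k ∈ Finset.range n, Z k ω) = m} :=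
      fun n m => (Finset.measurable_sum _ fun k _ => hZ k) (measurableSet_singleton m)
    have hdisj : Pairwise (Function.onFun Disjoint
        fun n => ({ω | N ω = n} ∩ {ω | (∑ k ∈ Finset.range n, Z k ω) = m})) := by
      intro i j hij
      rw [Function.onFun, Set.disjoint_left]
      rintro ω ⟨h1, _⟩ ⟨h3, _⟩
      exact hij (h1.symm.trans h3)
    rw [hUnion, measure_iUnion hdisj fun n => (hmeasN n).inter (hmeasS n m)]
    congr 1
    ext n
    refine (Indep_iff _ _ _).mp hNZ _ _ ⟨{n}, measurableSet_singleton n, rfl⟩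
      ⟨{g : ℕ → ℕ | (∑ k ∈ Finset.range n, g k) = m},
        (Finset.measurable_sum _ fun k _ => measurable_pi_apply k) (measurableSet_singleton m),
        rfl⟩
  -- real representation of P(M = m) as a series
  have hq : ∀ m : ℕ, (P {ω | (∑ k ∈ Finset.range (N ω), Z k ω) = m}).toReal
      = ∑' n : ℕ, panjerF P N v n m := by
    intro m
    rw [hdecomp m, ENNReal.tsum_toReal_eq
      (fun n => ENNReal.mul_ne_top (measure_ne_top _ _) (measure_ne_top _ _))]
    exact tsum_congr fun n => by rw [ENNReal.toReal_mul, hbin n m]; rfl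
  have hFsm : ∀ m : ℕ, Summable (fun n : ℕ => panjerF P N v n m) := by
    intro m
    have h1 : Summable (fun n : ℕ =>
        (P {ω | N ω = n} * P {ω | (∑ k ∈ Finset.range n, Z k ω) = m}).toReal) :=
      ENNReal.summable_toReal (by rw [← hdecomp m]; exact measure_ne_top _ _)
    refine h1.congr fun n => ?_
    rw [ENNReal.toReal_mul, hbin n m]; rfl
  obtain ⟨hv0, hv1⟩ := hv
  have hd : (0:ℝ) < 1 - a * (1 - v) := by linarith
  intro m hm
  obtain ⟨m', rfl⟩ : ∃ m'', m = m'' + 1 := ⟨m - 1, by omega⟩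
  have hrec : (P {ω | (∑ k ∈ Finset.range (N ω), Z k ω) = m' + 1}).toReal
      = a * (1-v) * (P {ω | (∑ k ∈ Finset.range (N ω), Z k ω) = m' + 1}).toReal
        + ((a + b/((m':ℝ)+1)) * v)
          * (P {ω | (∑ k ∈ Finset.range (N ω), Z k ω) = m'}).toReal := by
    have hF0 : panjerF P N v 0 (m' + 1) = 0 := by
      unfold panjerF; simp
    have hrec0 : (∑' n : ℕ, panjerF P N v n (m'+1))
        = a * (1-v) * (∑' n : ℕ, panjerF P N v n (m'+1))
          + ((a + b/((m':ℝ)+1)) * v) * (∑' n : ℕ, panjerF P N v n m') := by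
      conv_lhs => rw [Summable.tsum_eq_zero_add (hFsm (m' + 1))]
      rw [hF0, zero_add]
      calc ∑' n : ℕ, panjerF P N v (n+1) (m'+1)
          = ∑' n : ℕ, (a * (1-v) * panjerF P N v n (m'+1)
              + ((a + b/((m':ℝ)+1)) * v) * panjerF P N v n m') :=
            tsum_congr fun n => panjerF_succ P N a b hPanjer v m' n
        _ = a * (1-v) * (∑' n : ℕ, panjerF P N v n (m'+1))
              + ((a + b/((m':ℝ)+1)) * v) * (∑' n : ℕ, panjerF P N v n m') := by
            rw [Summable.tsum_add ((hFsm (m'+1)).mul_left _) ((hFsm m').mul_left _),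
              tsum_mul_left, tsum_mul_left]
    rw [hq (m' + 1), hq m']
    exact hrec0
  have hmeq : (m' + 1) - 1 = m' := by omega
  rw [hmeq]
  have hm1 : ((m':ℝ)+1) ≠ 0 := by positivity
  have hd' : (1 - a * (1 - v)) ≠ 0 := ne_of_gt hd
  have hcast : ((m' + 1 : ℕ) : ℝ) = (m' : ℝ) + 1 := by push_cast; ring
  rw [hcast]
  set q1 := (P {ω | (∑ k ∈ Finset.range (N ω), Z k ω) = m' + 1}).toReal
  set q0 := (P {ω | (∑ k ∈ Finset.range (N ω), Z k ω) = m'}).toReal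
  field_simp at hrec
  have hstep : q1 = (a * v * ((m':ℝ)+1) + b * v) * q0
      / ((1 - a * (1 - v)) * ((m':ℝ)+1)) := by
    rw [eq_div_iff (mul_ne_zero hd' hm1)]
    linear_combination hrec
  rw [hstep]
  field_simp
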